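/- arXiv:1709.06273 — 2 statements merged into one kernel-verified Lean document; each statement's English description precedes it below -/
import Mathlib

section
/- Let C be a category with zero morphisms, S : C ⥤ C an endofunctor, and natural transformations p : 𝟭_C ⟶ S and s₀, s₁ : S ⟶ 𝟭_C such that p ≫ s₀ = 𝟙 and p ≫ s₁ = 𝟙 (as natural transformations from 𝟭_C to 𝟭_C). Let A be an object of C such that p.app A is an isomorphism (A is 'A¹-invariant'), and let B be an object of C for which there exists a morphism h : B ⟶ S.obj B with h ≫ s₀.app B = 𝟙_B and h ≫ s₁.app B = 0 (B is 'A¹-contractible'). Then every morphism f : B ⟶ A is the zero morphism. -/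
open CategoryTheory

/-- Abstract form of the orthogonality lemma (Lemma `lm:contrinvort`):
if `S` is an endofunctor with natural transformations `p : 𝟭 ⟶ S` and
`s₀ s₁ : S ⟶ 𝟭` satisfying `p ≫ s₀ = 𝟙` and `p ≫ s₁ = 𝟙`, then every map from
an `𝔸¹`-contractible object `B` to an `𝔸¹`-invariant object `A` is zero. -/
theorem contractible_to_invariant_eq_zero
    {C : Type*} [Category C] [Limits.HasZeroMorphisms C]
    (S : C ⥤ C) (p : 𝟭 C ⟶ S) (s₀ s₁ : S ⟶ 𝟭 C)
    (hp0 : p ≫ s₀ = 𝟙 (𝟭 C)) (hp1 : p ≫ s₁ = 𝟙 (𝟭 C))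
    (A : C) (hA : IsIso (p.app A))
    (B : C) (h : B ⟶ S.obj B)
    (h0 : h ≫ s₀.app B = 𝟙 B) (h1 : h ≫ s₁.app B = 0)
    (f : B ⟶ A) : f = 0 := by
  have e0 : p.app A ≫ s₀.app A = 𝟙 A := congrArg (fun t => t.app A) hp0
  have e1 : p.app A ≫ s₁.app A = 𝟙 A := congrArg (fun t => t.app A) hp1
  have hs : s₀.app A = s₁.app A := by
    have := IsIso.eq_inv_of_hom_inv_id e0
    rw [this, IsIso.eq_inv_of_hom_inv_id e1]
  have n0 : S.map f ≫ s₀.app A = s₀.app B ≫ f := s₀.naturality f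
  have n1 : S.map f ≫ s₁.app A = s₁.app B ≫ f := s₁.naturality f
  calc f = 𝟙 B ≫ f := by simp
    _ = (h ≫ s₀.app B) ≫ f := by rw [h0]
    _ = h ≫ S.map f ≫ s₀.app A := by rw [Category.assoc, n0]
    _ = h ≫ S.map f ≫ s₁.app A := by rw [hs]
    _ = (h ≫ s₁.app B) ≫ f := by rw [Category.assoc, n1]
    _ = 0 := by rw [h1, Limits.zero_comp]
end

section
/- Let A and B be commutative rings, P a module with commuting A-module and B-module structures that is finitely generated and projective as an A-module, and Q a B-module that is finitely generated and projective as a B-module. Then the canonical A-linear map μ : Hom_B(Q, B) ⊗_B Hom_A(P, A) → Hom_A(Q ⊗_B P, A), determined by μ(g ⊗ f)(q ⊗ p) = f(g(q) · p) (where g(q) ∈ B acts on p via the B-module structure of P), is bijective. -/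
open scoped TensorProduct

section DomainModule

/-- The action of `S` on `M →ₗ[R] N` through the domain: `(s • f) m = f (s • m)`.
This is the module structure on duals used in the paper: `(b • g) (q) = g (b • q)`. -/
instance (priority := 50) LinearMap.domainModule
    {R S M N : Type*} [CommSemiring R] [CommSemiring S]
    [AddCommMonoid M] [AddCommMonoid N] [Module R M] [Module R N]
    [Module S M] [SMulCommClass S R M] : Module S (M →ₗ[R] N) where
  smul s f :=
    { toFun := fun m => f (s • m)
      map_add' := fun x y => by simp [smul_add]
      map_smul' := fun r x => by simp [smul_comm s r x] }
  one_smul f := by ext m; show f (1 • m) = f m; rw [one_smul]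
  mul_smul s t f := by
    ext m
    show f ((s * t) • m) = f (t • s • m)
    rw [mul_smul, smul_comm]
  smul_zero s := by ext m; rfl
  smul_add s f g := by ext m; rfl
  add_smul s t f := by
    ext m
    show f ((s + t) • m) = f (s • m) + f (t • m)
    rw [add_smul, map_add]
  zero_smul f := by ext m; show f (0 • m) = 0; rw [zero_smul, map_zero]

/-- The domain action of `S` commutes with the codomain action of `S'` on `M →ₗ[R] N`. -/
instance LinearMap.domainModule_smulCommClass
    {R S S' M N : Type*} [CommSemiring R] [CommSemiring S] [Semiring S']
    [AddCommMonoid M] [AddCommMonoid N] [Module R M] [Module R N]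
    [Module S M] [SMulCommClass S R M]
    [Module S' N] [SMulCommClass R S' N] :
    SMulCommClass S S' (M →ₗ[R] N) :=
  ⟨fun _ _ _ => LinearMap.ext fun _ => rfl⟩

end DomainModule

section RightModule

variable {B A M N : Type*} [CommSemiring B] [Semiring A]
  [AddCommMonoid M] [AddCommMonoid N] [Module B M] [Module B N]
  [Module A N] [SMulCommClass B A N]

/-- The scalar action of `A` on `M ⊗[B] N` through the right factor:
`a • (m ⊗ n) = m ⊗ (a • n)`. -/
noncomputable def TensorProduct.rightSMul (a : A) (x : M ⊗[B] N) : M ⊗[B] N :=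
  (TensorProduct.comm B M N).symm (a • (TensorProduct.comm B M N x))

/-- The module structure of `A` on `M ⊗[B] N` through the right factor:
`a • (m ⊗ n) = m ⊗ (a • n)`. -/
noncomputable instance (priority := 50) TensorProduct.rightModule :
    Module A (M ⊗[B] N) where
  smul := TensorProduct.rightSMul
  one_smul x := by
    show TensorProduct.rightSMul (1 : A) x = x
    simp [TensorProduct.rightSMul]
  mul_smul a b x := by
    show TensorProduct.rightSMul (a * b) x =
      TensorProduct.rightSMul a (TensorProduct.rightSMul b x)
    simp [TensorProduct.rightSMul, mul_smul]
  smul_zero a := by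
    show TensorProduct.rightSMul a (0 : M ⊗[B] N) = 0
    simp [TensorProduct.rightSMul]
  smul_add a x y := by
    show TensorProduct.rightSMul a (x + y) =
      TensorProduct.rightSMul a x + TensorProduct.rightSMul a y
    simp [TensorProduct.rightSMul, smul_add]
  add_smul a b x := by
    show TensorProduct.rightSMul (a + b) x =
      TensorProduct.rightSMul a x + TensorProduct.rightSMul b x
    simp [TensorProduct.rightSMul, add_smul]
  zero_smul x := by
    show TensorProduct.rightSMul (0 : A) x = 0
    simp [TensorProduct.rightSMul]

@[simp] theorem TensorProduct.rightModule_smul_tmul (a : A) (m : M) (n : N) :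
    a • (m ⊗ₜ[B] n) = m ⊗ₜ[B] (a • n) := by
  show TensorProduct.rightSMul a (m ⊗ₜ[B] n) = m ⊗ₜ[B] (a • n)
  simp [TensorProduct.rightSMul, TensorProduct.smul_tmul']

end RightModule

section DTH

open TensorProduct LinearMap Module

theorem aux_dualTensorHom_naturality {R M₁ M₂ N : Type*} [CommRing R]
    [AddCommGroup M₁] [AddCommGroup M₂] [AddCommGroup N]
    [Module R M₁] [Module R M₂] [Module R N]
    (u : M₁ →ₗ[R] M₂) (x : Module.Dual R M₂ ⊗[R] N) :
    dualTensorHom R M₁ N (TensorProduct.map u.dualMap LinearMap.id x)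
      = (dualTensorHom R M₂ N x).comp u := by
  induction x using TensorProduct.induction_on with
  | zero => simp
  | tmul φ n => ext m; simp
  | add x y hx hy =>
      simp only [map_add, hx, hy, LinearMap.add_comp]

theorem aux_dualTensorHom_bijective (R M N : Type*) [CommRing R]
    [AddCommGroup M] [AddCommGroup N] [Module R M] [Module R N]
    [Module.Finite R M] [Module.Projective R M] :
    Function.Bijective (dualTensorHom R M N) := by
  classical
  obtain ⟨n, f, g, -, -, hfg⟩ := Module.Finite.exists_comp_eq_id_of_projective R M
  have hF : Function.Bijective (dualTensorHom R (Fin n → R) N) := by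
    have hco : ⇑(dualTensorHom R (Fin n → R) N)
        = ⇑(dualTensorHomEquivOfBasis (N := N) (Pi.basisFun R (Fin n))) :=
      funext fun x => (dualTensorHomEquivOfBasis_apply (N := N) (Pi.basisFun R (Fin n)) x)
    rw [hco]
    exact (dualTensorHomEquivOfBasis (N := N) (Pi.basisFun R (Fin n))).bijective
  have hdual : g.dualMap ∘ₗ f.dualMap = LinearMap.id := by
    ext φ m
    simp only [LinearMap.coe_comp, Function.comp_apply, LinearMap.dualMap_apply,
      LinearMap.id_coe, id_eq]
    exact congrArg φ (LinearMap.congr_fun hfg m)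
  have hretr : ∀ x : Module.Dual R M ⊗[R] N,
      TensorProduct.map g.dualMap LinearMap.id
        (TensorProduct.map f.dualMap LinearMap.id x) = x := by
    intro x
    rw [← LinearMap.comp_apply, ← TensorProduct.map_comp, hdual, LinearMap.id_comp,
      TensorProduct.map_id, LinearMap.id_apply]
  constructor
  · intro x y hxy
    have h1 : dualTensorHom R (Fin n → R) N (TensorProduct.map f.dualMap LinearMap.id x)
        = dualTensorHom R (Fin n → R) N (TensorProduct.map f.dualMap LinearMap.id y) := by
      rw [aux_dualTensorHom_naturality, aux_dualTensorHom_naturality, hxy]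
    have h2 := hF.injective h1
    rw [← hretr x, ← hretr y, h2]
  · intro h
    obtain ⟨w, hw⟩ := hF.surjective (h.comp f)
    refine ⟨TensorProduct.map g.dualMap LinearMap.id w, ?_⟩
    rw [aux_dualTensorHom_naturality, hw, LinearMap.comp_assoc, hfg, LinearMap.comp_id]

end DTH

section MainAux

open TensorProduct LinearMap

variable {A B P Q : Type*} [CommRing A] [CommRing B]
  [AddCommGroup P] [Module A P] [Module B P]
  [SMulCommClass A B P] [SMulCommClass B A P]
  [AddCommGroup Q] [Module B Q]

/-- Uncurrying as an additive map. -/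
noncomputable def uncurryDualAux (Φ : Q →ₗ[B] (P →ₗ[A] A)) : (Q ⊗[B] P) →+ A :=
  TensorProduct.liftAddHom
    { toFun := fun q => (Φ q).toAddMonoidHom
      map_zero' := by ext p; simp
      map_add' := fun q q' => by ext p; simp }
    (fun b q p => by
      show Φ (b • q) p = Φ q (b • p)
      rw [map_smul]; rfl)

theorem uncurryDualAux_tmul (Φ : Q →ₗ[B] (P →ₗ[A] A)) (q : Q) (p : P) :
    uncurryDualAux Φ (q ⊗ₜ[B] p) = Φ q p :=
  TensorProduct.liftAddHom_tmul _ _ _ _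

theorem uncurryDualAux_smul (Φ : Q →ₗ[B] (P →ₗ[A] A)) (a : A) (x : Q ⊗[B] P) :
    uncurryDualAux Φ (a • x) = a • uncurryDualAux Φ x := by
  induction x using TensorProduct.induction_on with
  | zero => rw [smul_zero, map_zero, smul_zero]
  | tmul q p =>
      rw [TensorProduct.rightModule_smul_tmul, uncurryDualAux_tmul, uncurryDualAux_tmul,
        map_smul]
  | add x y hx hy => rw [smul_add, map_add, map_add, hx, hy, smul_add]

/-- Uncurrying: from `Q →ₗ[B] Hom_A(P, A)` to `Hom_A(Q ⊗[B] P, A)`. -/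
noncomputable def uncurryDual (Φ : Q →ₗ[B] (P →ₗ[A] A)) : (Q ⊗[B] P) →ₗ[A] A where
  toFun := uncurryDualAux Φ
  map_add' x y := map_add _ x y
  map_smul' a x := uncurryDualAux_smul Φ a x

@[simp] theorem uncurryDual_tmul (Φ : Q →ₗ[B] (P →ₗ[A] A)) (q : Q) (p : P) :
    uncurryDual Φ (q ⊗ₜ[B] p) = Φ q p :=
  uncurryDualAux_tmul Φ q p

theorem ext_tmul_dual {L₁ L₂ : (Q ⊗[B] P) →ₗ[A] A}
    (h : ∀ q p, L₁ (q ⊗ₜ[B] p) = L₂ (q ⊗ₜ[B] p)) : L₁ = L₂ := by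
  refine LinearMap.ext fun x => ?_
  induction x using TensorProduct.induction_on with
  | zero => simp
  | tmul q p => exact h q p
  | add x y hx hy => rw [map_add, map_add, hx, hy]

/-- Currying: from `Hom_A(Q ⊗[B] P, A)` to `Q →ₗ[B] Hom_A(P, A)`. -/
noncomputable def curryDual (L : (Q ⊗[B] P) →ₗ[A] A) : Q →ₗ[B] (P →ₗ[A] A) where
  toFun q :=
    { toFun := fun p => L (q ⊗ₜ[B] p)
      map_add' := fun p p' => by
        show L (q ⊗ₜ[B] (p + p')) = L (q ⊗ₜ[B] p) + L (q ⊗ₜ[B] p')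
        rw [TensorProduct.tmul_add, map_add]
      map_smul' := fun a p => by
        show L (q ⊗ₜ[B] (a • p)) = a • L (q ⊗ₜ[B] p)
        rw [← TensorProduct.rightModule_smul_tmul, map_smul] }
  map_add' q q' := by ext p; simp [TensorProduct.add_tmul]
  map_smul' b q := by
    ext p
    show L ((b • q) ⊗ₜ[B] p) = L (q ⊗ₜ[B] (b • p))
    rw [TensorProduct.smul_tmul]

/-- The currying map as an `A`-linear map. -/
noncomputable def uncurryDualₗ : (Q →ₗ[B] (P →ₗ[A] A)) →ₗ[A] ((Q ⊗[B] P) →ₗ[A] A) where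
  toFun := uncurryDual
  map_add' Φ Ψ := ext_tmul_dual fun q p => by simp
  map_smul' a Φ := ext_tmul_dual fun q p => by simp

theorem uncurryDualₗ_bijective :
    Function.Bijective (uncurryDualₗ (A := A) (B := B) (P := P) (Q := Q)) := by
  refine Function.bijective_iff_has_inverse.mpr ⟨curryDual, fun Φ => ?_, fun L => ?_⟩
  · refine LinearMap.ext fun q => LinearMap.ext fun p => ?_
    show uncurryDual Φ (q ⊗ₜ[B] p) = Φ q p
    simp
  · exact ext_tmul_dual fun q p => by simp [curryDual, uncurryDualₗ]

theorem dth_smul (a : A) (x : (Q →ₗ[B] B) ⊗[B] (P →ₗ[A] A)) :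
    dualTensorHom B Q (P →ₗ[A] A) (a • x) = a • dualTensorHom B Q (P →ₗ[A] A) x := by
  induction x using TensorProduct.induction_on with
  | zero => rw [smul_zero, map_zero, smul_zero]
  | tmul g f =>
      rw [TensorProduct.rightModule_smul_tmul]
      exact LinearMap.ext fun q => LinearMap.ext fun p => rfl
  | add x y hx hy => rw [smul_add, map_add, map_add, hx, hy, smul_add]

/-- `dualTensorHom` over `B` as an `A`-linear map. -/
noncomputable def nuMapₗ :
    ((Q →ₗ[B] B) ⊗[B] (P →ₗ[A] A)) →ₗ[A] (Q →ₗ[B] (P →ₗ[A] A)) where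
  toFun := dualTensorHom B Q (P →ₗ[A] A)
  map_add' x y := map_add _ x y
  map_smul' a x := dth_smul a x

end MainAux

/-- For commuting `A`- and `B`-module structures on `P` with `P` finite projective over `A`,
and `Q` finite projective over `B`, the canonical `A`-linear map
`Hom_B(Q, B) ⊗[B] Hom_A(P, A) → Hom_A(Q ⊗[B] P, A)`, determined by
`μ (g ⊗ f) (q ⊗ p) = f (g q • p)`, is bijective. Here `Hom_B(Q, B)` and `Hom_A(P, A)` carry
the `B`-module structures `(b • g) q = g (b • q)` (for `Hom_A(P, A)`, via the `B`-action on
`P`), and `Q ⊗[B] P` carries the `A`-module structure `a • (q ⊗ p) = q ⊗ (a • p)`. -/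
theorem dualTensorDual_bijective
    (A B P Q : Type*) [CommRing A] [CommRing B]
    [AddCommGroup P] [Module A P] [Module B P]
    [SMulCommClass A B P] [SMulCommClass B A P]
    [AddCommGroup Q] [Module B Q]
    [Module.Finite A P] [Module.Projective A P]
    [Module.Finite B Q] [Module.Projective B Q] :
    ∃ μ : ((Q →ₗ[B] B) ⊗[B] (P →ₗ[A] A)) →ₗ[A] ((Q ⊗[B] P) →ₗ[A] A),
      (∀ (g : Q →ₗ[B] B) (f : P →ₗ[A] A) (q : Q) (p : P),
        μ (g ⊗ₜ[B] f) (q ⊗ₜ[B] p) = f (g q • p)) ∧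
      Function.Bijective μ := by
  refine ⟨uncurryDualₗ.comp nuMapₗ, fun g f q p => ?_, ?_⟩
  · rfl
  · exact uncurryDualₗ_bijective.comp (aux_dualTensorHom_bijective B Q (P →ₗ[A] A))
end
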